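/- arXiv:1906.07658 — 3 statements merged into one kernel-verified Lean document; each statement's English description precedes it below -/
import Mathlib

section
/- If ψ is a continuously differentiable, symmetric, strictly log-concave probability density with full support on ℝ, then its cumulative distribution function Ψ is strictly log-concave, i.e., log Ψ is strictly concave on ℝ. -/
open MeasureTheory

/-- If ψ is a continuously differentiable, symmetric, strictly log-concave probability
density with full support on ℝ, then its CDF Ψ is strictly log-concave. -/
theorem cdf_strict_log_concave (ψ : ℝ → ℝ)
    (hC1 : ContDiff ℝ 1 ψ)
    (hsymm : ∀ t, ψ (-t) = ψ t)
    (hpos : ∀ t, 0 < ψ t)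
    (hlogconc : StrictConcaveOn ℝ Set.univ (fun t => Real.log (ψ t)))
    (hint : ∫ t, ψ t = 1) :
    StrictConcaveOn ℝ Set.univ (fun s => Real.log (∫ t in Set.Iic s, ψ t)) := by
  set Ψ : ℝ → ℝ := fun s => ∫ t in Set.Iic s, ψ t with hΨdef
  have hcont : Continuous ψ := hC1.continuous
  have hcontd : Continuous (deriv ψ) := hC1.continuous_deriv le_rfl
  have hψint : Integrable ψ := by
    by_contra h
    rw [integral_undef h] at hint
    norm_num at hint
  have hIic : ∀ s : ℝ, IntegrableOn ψ (Set.Iic s) := fun s => hψint.integrableOn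
  have hii : ∀ a b : ℝ, IntervalIntegrable ψ volume a b :=
    fun a b => hψint.intervalIntegrable
  -- positivity of Ψ
  have hΨpos : ∀ s, 0 < Ψ s := by
    intro s
    have h1 : (0:ℝ) < ∫ t in (s-1)..s, ψ t :=
      intervalIntegral.intervalIntegral_pos_of_pos (hii _ _) hpos (by linarith)
    have h2 : Ψ s - Ψ (s-1) = ∫ t in (s-1)..s, ψ t :=
      intervalIntegral.integral_Iic_sub_Iic (hIic _) (hIic _)
    have h3 : 0 ≤ Ψ (s-1) :=
      setIntegral_nonneg measurableSet_Iic (fun t _ => (hpos t).le)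
    linarith
  -- derivative of Ψ
  have heq : ∀ u : ℝ, Ψ u = Ψ 0 + ∫ t in (0:ℝ)..u, ψ t := by
    intro u
    have := intervalIntegral.integral_Iic_sub_Iic (hIic 0) (hIic u)
    linarith
  have hΨd : ∀ s, HasDerivAt Ψ (ψ s) s := by
    intro s
    have hd : HasDerivAt (fun u => ∫ t in (0:ℝ)..u, ψ t) (ψ s) s :=
      intervalIntegral.integral_hasDerivAt_right (hii 0 s)
        hcont.aestronglyMeasurable.stronglyMeasurableAtFilter hcont.continuousAt
    have hd' := hd.const_add (Ψ 0)
    exact hd'.congr_of_eventuallyEq (Filter.Eventually.of_forall fun u => heq u)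
  -- derivative of ψ and of log ψ
  have hψd : ∀ t, HasDerivAt ψ (deriv ψ t) t :=
    fun t => ((hC1.differentiable one_ne_zero) t).hasDerivAt
  have hlogd : ∀ t, HasDerivAt (fun t => Real.log (ψ t)) (deriv ψ t / ψ t) t :=
    fun t => (hψd t).log (hpos t).ne'
  -- ψ'/ψ is strictly decreasing
  have hratio : StrictAnti (fun t => deriv ψ t / ψ t) := by
    intro a b hab
    have h := hlogconc.strictAntiOn_deriv
      (fun x _ => ((hψd x).log (hpos x).ne').differentiableAt)
      (Set.mem_univ a) (Set.mem_univ b) hab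
    rwa [(hlogd a).deriv, (hlogd b).deriv] at h
  -- Ψ tends to 0 at -∞
  have hΨ0 : Filter.Tendsto Ψ Filter.atBot (nhds 0) := by
    have h := intervalIntegral_tendsto_integral_Iic (μ := volume) (f := ψ) 0
      (hIic 0) Filter.tendsto_id
    have heq2 : Ψ = fun u => Ψ 0 - ∫ t in u..(0:ℝ), ψ t := by
      funext u
      have := intervalIntegral.integral_Iic_sub_Iic (hIic u) (hIic 0)
      linarith
    rw [heq2]
    have h' : Filter.Tendsto (fun u : ℝ => Ψ 0 - ∫ t in u..(0:ℝ), ψ t)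
        Filter.atBot (nhds (Ψ 0 - Ψ 0)) := Filter.Tendsto.sub tendsto_const_nhds h
    simpa using h'
  -- key pointwise inequality: ψ' Ψ ≤ ψ²
  have hkey : ∀ s, deriv ψ s * Ψ s ≤ ψ s * ψ s := by
    intro s
    rcases le_or_gt (deriv ψ s) 0 with h | h
    · nlinarith [hΨpos s, hpos s]
    · set c := deriv ψ s / ψ s with hc
      have hcψ : c * ψ s = deriv ψ s := by rw [hc, div_mul_cancel₀ _ (hpos s).ne']
      have hc0 : 0 < c := div_pos h (hpos s)
      have hstep : ∀ u < s, c * (Ψ s - Ψ u) ≤ ψ s - ψ u := by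
        intro u hu
        have hint1 : (∫ t in u..s, c * ψ t) ≤ ∫ t in u..s, deriv ψ t := by
          apply intervalIntegral.integral_mono_on hu.le ((hii u s).const_mul c)
            (hcontd.intervalIntegrable u s)
          intro t ht
          rcases eq_or_lt_of_le ht.2 with rfl | hts
          · rw [hcψ]
          · have h2 : c < deriv ψ t / ψ t := hratio hts
            have h3 := hpos t
            rw [lt_div_iff₀ h3] at h2
            linarith
        have hd2 : (∫ t in u..s, deriv ψ t) = ψ s - ψ u :=
          intervalIntegral.integral_deriv_eq_sub
            (fun x _ => (hC1.differentiable one_ne_zero) x)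
            (hcontd.intervalIntegrable u s)
        have hc2 : (∫ t in u..s, c * ψ t) = c * ∫ t in u..s, ψ t :=
          intervalIntegral.integral_const_mul c ψ
        have hΨeq : Ψ s - Ψ u = ∫ t in u..s, ψ t :=
          intervalIntegral.integral_Iic_sub_Iic (hIic u) (hIic s)
        rw [hc2, hd2, ← hΨeq] at hint1
        exact hint1
      have hlim : c * Ψ s ≤ ψ s := by
        have h2 : Filter.Tendsto (fun u => ψ s + c * Ψ u) Filter.atBot (nhds (ψ s)) := by
          simpa using tendsto_const_nhds.add (hΨ0.const_mul c)
        refine ge_of_tendsto h2 ?_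
        filter_upwards [Filter.eventually_lt_atBot s] with u hu
        have h3 := hstep u hu
        have h4 := hpos u
        nlinarith
      nlinarith [hpos s]
  -- g = ψ/Ψ and its derivative
  have hgd : ∀ s, HasDerivAt (fun s => ψ s / Ψ s)
      ((deriv ψ s * Ψ s - ψ s * ψ s) / (Ψ s) ^ 2) s :=
    fun s => (hψd s).div (hΨd s) (hΨpos s).ne'
  have hanti : Antitone (fun s => ψ s / Ψ s) := by
    apply antitone_of_deriv_nonpos
    · exact fun s => ((hgd s).differentiableAt)
    · intro s
      rw [(hgd s).deriv]
      apply div_nonpos_of_nonpos_of_nonneg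
      · linarith [hkey s]
      · positivity
  have hg_anti : StrictAnti (fun s => ψ s / Ψ s) := by
    intro a b hab
    rcases lt_or_eq_of_le (hanti hab.le) with h | h
    · exact h
    · exfalso
      -- g is constant on [a,b]
      have hconst : ∀ s ∈ Set.Icc a b, ψ s / Ψ s = ψ a / Ψ a := by
        intro s hs
        have h1 := hanti hs.1
        have h2 := hanti hs.2
        have h3 : ψ b / Ψ b = ψ a / Ψ a := h
        linarith
      -- at interior points the derivative of g is 0, hence ψ'/ψ = ψ/Ψ there
      have hint' : ∀ s ∈ Set.Ioo a b, deriv ψ s / ψ s = ψ a / Ψ a := by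
        intro s hs
        have hev : (fun u => ψ u / Ψ u) =ᶠ[nhds s] fun _ => ψ a / Ψ a := by
          filter_upwards [Ioo_mem_nhds hs.1 hs.2] with u hu
          exact hconst u (Set.Ioo_subset_Icc_self hu)
        have hder0 : deriv (fun u => ψ u / Ψ u) s = 0 := by
          rw [hev.deriv_eq]
          exact deriv_const s _
        rw [(hgd s).deriv] at hder0
        have hnum : deriv ψ s * Ψ s = ψ s * ψ s := by
          rcases div_eq_zero_iff.mp hder0 with h' | h'
          · linarith
          · exact absurd h' (pow_ne_zero 2 (hΨpos s).ne')
        have hgs : ψ s / Ψ s = ψ a / Ψ a := hconst s (Set.Ioo_subset_Icc_self hs)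
        rw [← hgs, div_eq_div_iff (hpos s).ne' (hΨpos s).ne']
        exact hnum
      -- two interior points give a contradiction with strict antitonicity of ψ'/ψ
      have hx : a + (b - a) / 3 ∈ Set.Ioo a b := by constructor <;> [linarith; linarith]
      have hy : a + 2 * (b - a) / 3 ∈ Set.Ioo a b := by constructor <;> [linarith; linarith]
      have hxy : a + (b - a) / 3 < a + 2 * (b - a) / 3 := by linarith
      have h3 : deriv ψ (a + 2 * (b - a) / 3) / ψ (a + 2 * (b - a) / 3)
          < deriv ψ (a + (b - a) / 3) / ψ (a + (b - a) / 3) := hratio hxy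
      rw [hint' _ hx, hint' _ hy] at h3
      exact lt_irrefl _ h3
  -- conclude
  have hlogΨd : ∀ s, HasDerivAt (fun s => Real.log (Ψ s)) (ψ s / Ψ s) s :=
    fun s => (hΨd s).log (hΨpos s).ne'
  have hderivanti : StrictAntiOn (deriv fun s => Real.log (Ψ s)) (interior Set.univ) := by
    intro x _ y _ hxy
    rw [(hlogΨd x).deriv, (hlogΨd y).deriv]
    exact hg_anti hxy
  exact StrictAntiOn.strictConcaveOn_of_deriv convex_univ
    (fun s _ => ((hlogΨd s).differentiableAt.continuousAt).continuousWithinAt) hderivanti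
end

section
/- Let ψ be a log-concave probability density on ℝ with CDF Ψ, and fix m ∈ {1,…,M}. Then the function v ↦ ∫_ℝ ψ(t) ∏_{ℓ ≠ m} Ψ(t + v_m - v_ℓ) dt is log-concave on ℝ^M. -/
open MeasureTheory Set ENNReal Pointwise

namespace OneHotAux

/-- 1-D Brunn–Minkowski, compact case. -/
lemma bm_compact {K L : Set ℝ} (hK : IsCompact K) (hL : IsCompact L)
    (hKne : K.Nonempty) (hLne : L.Nonempty) :
    volume K + volume L ≤ volume (K + L) := by
  set k := sSup K with hk
  set l := sInf L with hl
  have hkK : k ∈ K := hK.sSup_mem hKne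
  have hlL : l ∈ L := hL.sInf_mem hLne
  have hX : (l +ᵥ K) ∪ (k +ᵥ L) ⊆ K + L := by
    rintro x (hx | hx)
    · obtain ⟨y, hy, rfl⟩ := hx
      simpa [vadd_eq_add, add_comm] using Set.add_mem_add hy hlL
    · obtain ⟨y, hy, rfl⟩ := hx
      simpa [vadd_eq_add] using Set.add_mem_add hkK hy
  have hI : (l +ᵥ K) ∩ (k +ᵥ L) ⊆ {l + k} := by
    rintro x ⟨hx1, hx2⟩
    obtain ⟨y, hy, rfl⟩ := hx1
    obtain ⟨z, hz, he⟩ := hx2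
    have h1 : y ≤ k := le_csSup hK.bddAbove hy
    have h2 : l ≤ z := csInf_le hL.bddBelow hz
    simp only [vadd_eq_add] at he ⊢
    have : l + y = l + k := by
      apply le_antisymm (by linarith)
      rw [← he]; linarith
    simp [this]
  have hmK : MeasurableSet (l +ᵥ K) := hK.measurableSet.const_vadd l
  have hmL : MeasurableSet (k +ᵥ L) := hL.measurableSet.const_vadd k
  calc volume K + volume L = volume (l +ᵥ K) + volume (k +ᵥ L) := by
        rw [measure_vadd, measure_vadd]
    _ = volume ((l +ᵥ K) ∪ (k +ᵥ L)) + volume ((l +ᵥ K) ∩ (k +ᵥ L)) :=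
        (measure_union_add_inter _ hmL).symm
    _ ≤ volume (K + L) + volume ({l + k} : Set ℝ) :=
        add_le_add (measure_mono hX) (measure_mono hI)
    _ = volume (K + L) := by simp

/-- 1-D Brunn–Minkowski, measurable case. -/
lemma bm_meas {A B : Set ℝ} (hA : MeasurableSet A) (hB : MeasurableSet B)
    (hAne : A.Nonempty) (hBne : B.Nonempty) :
    volume A + volume B ≤ volume (A + B) := by
  refine le_of_forall_lt fun r hr => ?_
  rcases eq_or_ne (volume A) 0 with h0A | h0A
  · obtain ⟨a₀, ha₀⟩ := hAne
    have hrB : r < volume B := by simpa [h0A] using hr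
    obtain ⟨L, hLB, hLc, hrL⟩ := hB.exists_lt_isCompact hrB
    calc r < volume L := hrL
      _ = volume (a₀ +ᵥ L) := (measure_vadd volume a₀ L).symm
      _ ≤ volume (A + B) := measure_mono (by
          rintro x ⟨y, hy, rfl⟩
          simpa [vadd_eq_add] using Set.add_mem_add ha₀ (hLB hy))
  rcases eq_or_ne (volume B) 0 with h0B | h0B
  · obtain ⟨b₀, hb₀⟩ := hBne
    have hrA : r < volume A := by simpa [h0B] using hr
    obtain ⟨K, hKA, hKc, hrK⟩ := hA.exists_lt_isCompact hrA
    calc r < volume K := hrK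
      _ = volume (b₀ +ᵥ K) := (measure_vadd volume b₀ K).symm
      _ ≤ volume (A + B) := measure_mono (by
          rintro x ⟨y, hy, rfl⟩
          simpa [vadd_eq_add, add_comm] using Set.add_mem_add (hKA hy) hb₀)
  obtain ⟨r1, hr1, r2, hr2, hrr⟩ := ENNReal.exists_lt_add_of_lt_add hr h0A h0B
  obtain ⟨K, hKA, hKc, hrK⟩ := hA.exists_lt_isCompact hr1
  obtain ⟨L, hLB, hLc, hrL⟩ := hB.exists_lt_isCompact hr2
  have hKne : K.Nonempty := nonempty_of_measure_ne_zero (ne_of_gt (lt_of_le_of_lt (zero_le : 0 ≤ r1) hrK))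
  have hLne : L.Nonempty := nonempty_of_measure_ne_zero (ne_of_gt (lt_of_le_of_lt (zero_le : 0 ≤ r2) hrL))
  calc r < r1 + r2 := hrr
    _ ≤ volume K + volume L := add_le_add hrK.le hrL.le
    _ ≤ volume (K + L) := bm_compact hKc hLc hKne hLne
    _ ≤ volume (A + B) := measure_mono (Set.add_subset_add hKA hLB)

/-- Scaled layer-cake formula. -/
lemma scaledLC {f : ℝ → ℝ} (hf : Measurable f) (hnn : ∀ x, 0 ≤ f x) {c : ℝ} (hc : 0 < c) :
    ∫⁻ t in Ioi (0:ℝ), volume {x | c * t < f x} =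
      ENNReal.ofReal c⁻¹ * ∫⁻ x, ENNReal.ofReal (f x) := by
  have key := lintegral_eq_lintegral_meas_lt (volume : Measure ℝ)
      (f := fun x => c⁻¹ * f x) (Filter.Eventually.of_forall fun x => mul_nonneg (inv_nonneg.mpr hc.le) (hnn x))
      ((hf.const_mul _).aemeasurable)
  have h1 : ∀ t : ℝ, {x | t < c⁻¹ * f x} = {x | c * t < f x} := by
    intro t; ext x; simp only [Set.mem_setOf_eq]
    rw [inv_mul_eq_div, lt_div_iff₀ hc, mul_comm]
  simp_rw [h1] at key
  rw [← key]
  simp_rw [ENNReal.ofReal_mul (le_of_lt (by positivity : (0:ℝ) < c⁻¹))]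
  rw [lintegral_const_mul _ hf.ennreal_ofReal]

/-- AM–GM in `ℝ≥0∞`. -/
lemma ennreal_amgm {x y : ℝ≥0∞} {a b : ℝ} (ha : 0 < a) (hb : 0 < b) (hab : a + b = 1) :
    x ^ a * y ^ b ≤ ENNReal.ofReal a * x + ENNReal.ofReal b * y := by
  rcases eq_or_ne x ∞ with rfl | hx
  · rcases eq_or_ne y 0 with rfl | hy
    · rw [ENNReal.zero_rpow_of_pos hb, mul_zero]; exact zero_le
    · refine le_trans le_top (le_of_eq ?_)
      exact (ENNReal.add_eq_top.mpr (Or.inl (ENNReal.mul_top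
        (by simp [ENNReal.ofReal_eq_zero, not_le, ha])))).symm
  rcases eq_or_ne y ∞ with rfl | hy
  · rcases eq_or_ne x 0 with rfl | hx0
    · rw [ENNReal.zero_rpow_of_pos ha, zero_mul]; exact zero_le
    · refine le_trans le_top (le_of_eq ?_)
      exact (ENNReal.add_eq_top.mpr (Or.inr (ENNReal.mul_top
        (by simp [ENNReal.ofReal_eq_zero, not_le, hb])))).symm
  rw [← ENNReal.ofReal_toReal hx, ← ENNReal.ofReal_toReal hy,
    ENNReal.ofReal_rpow_of_nonneg ENNReal.toReal_nonneg ha.le,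
    ENNReal.ofReal_rpow_of_nonneg ENNReal.toReal_nonneg hb.le,
    ← ENNReal.ofReal_mul (Real.rpow_nonneg ENNReal.toReal_nonneg _),
    ← ENNReal.ofReal_mul ha.le, ← ENNReal.ofReal_mul hb.le, ← ENNReal.ofReal_add
      (mul_nonneg ha.le ENNReal.toReal_nonneg) (mul_nonneg hb.le ENNReal.toReal_nonneg)]
  exact ENNReal.ofReal_le_ofReal
    (Real.geom_mean_le_arith_mean2_weighted ha.le hb.le ENNReal.toReal_nonneg
      ENNReal.toReal_nonneg hab)

/-- Prékopa–Leindler on `ℝ`, bounded case. -/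
lemma pl_bounded {f g h : ℝ → ℝ} (hfm : Measurable f) (hgm : Measurable g) (hhm : Measurable h)
    (hf0 : ∀ x, 0 ≤ f x) (hg0 : ∀ x, 0 ≤ g x) (hh0 : ∀ x, 0 ≤ h x)
    {n : ℝ} (hfb : ∀ x, f x ≤ n) (hgb : ∀ x, g x ≤ n)
    {a b : ℝ} (ha : 0 < a) (hb : 0 < b) (hab : a + b = 1)
    (hyp : ∀ x y, f x ^ a * g y ^ b ≤ h (a * x + b * y)) :
    (∫⁻ x, ENNReal.ofReal (f x)) ^ a * (∫⁻ x, ENNReal.ofReal (g x)) ^ b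
      ≤ ∫⁻ x, ENNReal.ofReal (h x) := by
  classical
  set cf := sSup (Set.range f) with hcfdef
  set cg := sSup (Set.range g) with hcgdef
  have hbf : BddAbove (Set.range f) := ⟨n, by rintro _ ⟨x, rfl⟩; exact hfb x⟩
  have hbg : BddAbove (Set.range g) := ⟨n, by rintro _ ⟨x, rfl⟩; exact hgb x⟩
  have hfle : ∀ x, f x ≤ cf := fun x => le_csSup hbf ⟨x, rfl⟩
  have hgle : ∀ x, g x ≤ cg := fun x => le_csSup hbg ⟨x, rfl⟩
  have hcf0 : 0 ≤ cf := le_trans (hf0 0) (hfle 0)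
  have hcg0 : 0 ≤ cg := le_trans (hg0 0) (hgle 0)
  rcases eq_or_lt_of_le hcf0 with h0 | hcfpos
  · have hz : ∀ x, f x = 0 := fun x => le_antisymm (h0 ▸ hfle x) (hf0 x)
    have : (∫⁻ x, ENNReal.ofReal (f x)) = 0 := by simp [hz]
    rw [this, ENNReal.zero_rpow_of_pos ha, zero_mul]
    exact zero_le
  rcases eq_or_lt_of_le hcg0 with h0 | hcgpos
  · have hz : ∀ x, g x = 0 := fun x => le_antisymm (h0 ▸ hgle x) (hg0 x)
    have : (∫⁻ x, ENNReal.ofReal (g x)) = 0 := by simp [hz]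
    rw [this, ENNReal.zero_rpow_of_pos hb, mul_zero]
    exact zero_le
  set c := cf ^ a * cg ^ b with hcdef
  have hcpos : 0 < c := mul_pos (Real.rpow_pos_of_pos hcfpos a) (Real.rpow_pos_of_pos hcgpos b)
  -- key measure inequality on level sets
  have key : ∀ t ∈ Ioo (0:ℝ) 1,
      ENNReal.ofReal a * volume {x | cf * t < f x} + ENNReal.ofReal b * volume {x | cg * t < g x}
        ≤ volume {x | c * t < h x} := by
    intro t ht
    set A := {x | cf * t < f x} with hA
    set B := {x | cg * t < g x} with hB
    have hAm : MeasurableSet A := measurableSet_lt measurable_const hfm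
    have hBm : MeasurableSet B := measurableSet_lt measurable_const hgm
    have hAne : A.Nonempty := by
      obtain ⟨_, ⟨x, rfl⟩, hx⟩ := exists_lt_of_lt_csSup (Set.range_nonempty f)
        (show cf * t < cf from mul_lt_of_lt_one_right hcfpos ht.2)
      exact ⟨x, hx⟩
    have hBne : B.Nonempty := by
      obtain ⟨_, ⟨x, rfl⟩, hx⟩ := exists_lt_of_lt_csSup (Set.range_nonempty g)
        (show cg * t < cg from mul_lt_of_lt_one_right hcgpos ht.2)
      exact ⟨x, hx⟩
    have hsub : a • A + b • B ⊆ {x | c * t < h x} := by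
      rintro z ⟨p, hp, q, hq, rfl⟩
      obtain ⟨x, hx, rfl⟩ := hp
      obtain ⟨y, hy, rfl⟩ := hq
      simp only [smul_eq_mul, Set.mem_setOf_eq]
      have hxA : cf * t < f x := hx
      have hyB : cg * t < g y := hy
      have h1 : (cf * t) ^ a < f x ^ a := Real.rpow_lt_rpow (mul_nonneg hcf0 ht.1.le) hxA ha
      have h2 : (cg * t) ^ b < g y ^ b := Real.rpow_lt_rpow (mul_nonneg hcg0 ht.1.le) hyB hb
      have htt : t ^ a * t ^ b = t := by
        rw [← Real.rpow_add ht.1, hab, Real.rpow_one]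
      have h3 : (cf * t) ^ a * (cg * t) ^ b = c * t := by
        rw [Real.mul_rpow hcfpos.le ht.1.le, Real.mul_rpow hcgpos.le ht.1.le, hcdef]
        calc cf ^ a * t ^ a * (cg ^ b * t ^ b) = cf ^ a * cg ^ b * (t ^ a * t ^ b) := by ring
          _ = cf ^ a * cg ^ b * t := by rw [htt]
      calc c * t = (cf * t) ^ a * (cg * t) ^ b := h3.symm
        _ < f x ^ a * g y ^ b := mul_lt_mul'' h1 h2 (Real.rpow_nonneg (mul_nonneg hcf0 ht.1.le) a) (Real.rpow_nonneg (mul_nonneg hcg0 ht.1.le) b)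
        _ ≤ h (a * x + b * y) := hyp x y
    have hvolA : volume (a • A) = ENNReal.ofReal a * volume A := by
      simpa [abs_of_pos ha] using Measure.addHaar_smul (volume : Measure ℝ) a A
    have hvolB : volume (b • B) = ENNReal.ofReal b * volume B := by
      simpa [abs_of_pos hb] using Measure.addHaar_smul (volume : Measure ℝ) b B
    calc ENNReal.ofReal a * volume A + ENNReal.ofReal b * volume B
        = volume (a • A) + volume (b • B) := by rw [hvolA, hvolB]
      _ ≤ volume (a • A + b • B) :=
          bm_meas (hAm.const_smul₀ a) (hBm.const_smul₀ b) (hAne.smul_set) (hBne.smul_set)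
      _ ≤ volume {x | c * t < h x} := measure_mono hsub
  -- vanishing of the tail
  have hIci : ∀ (F : ℝ → ℝ) (cF : ℝ), (∀ x, F x ≤ cF) → 0 ≤ cF →
      ∫⁻ t in Ici (1:ℝ), volume {x | cF * t < F x} = 0 := by
    intro F cF hle h0
    have hz : ∀ t ∈ Ici (1:ℝ), volume {x | cF * t < F x} = (fun _ : ℝ => (0:ℝ≥0∞)) t := by
      intro t ht
      have : {x | cF * t < F x} = (∅ : Set ℝ) := by
        ext x; simp only [Set.mem_setOf_eq, Set.mem_empty_iff_false, iff_false, not_lt]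
        exact (hle x).trans (le_mul_of_one_le_right h0 ht)
      simp [this]
    rw [setLIntegral_congr_fun measurableSet_Ici hz, lintegral_zero]
  -- splitting and layer-cake on (0,1)
  have hdisj : Disjoint (Ioo (0:ℝ) 1) (Ici 1) :=
    Set.disjoint_left.mpr fun t ht h1 => absurd ht.2 (not_lt.mpr h1)
  have hu : Ioi (0:ℝ) = Ioo 0 1 ∪ Ici 1 := by
    ext t; simp only [mem_Ioi, mem_union, mem_Ioo, mem_Ici]
    constructor
    · intro htt; rcases lt_or_ge t 1 with h1 | h1
      exacts [Or.inl ⟨htt, h1⟩, Or.inr h1]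
    · rintro (⟨htt, _⟩ | htt) <;> linarith
  have hsplit : ∀ (F : ℝ → ℝ), Measurable F → (∀ x, 0 ≤ F x) → ∀ (cF : ℝ), 0 < cF →
      (∀ x, F x ≤ cF) →
      ∫⁻ t in Ioo (0:ℝ) 1, volume {x | cF * t < F x}
        = ENNReal.ofReal cF⁻¹ * ∫⁻ x, ENNReal.ofReal (F x) := by
    intro F hFm hF0 cF hcF hFb
    have hLC := scaledLC hFm hF0 hcF
    rw [hu, lintegral_union measurableSet_Ici hdisj, hIci F cF hFb hcF.le, add_zero] at hLC
    exact hLC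
  set P := ∫⁻ x, ENNReal.ofReal (f x) with hP
  set Q := ∫⁻ x, ENNReal.ofReal (g x) with hQ
  -- measurability of level-measure functions
  have hmes : ∀ (F : ℝ → ℝ) (cF : ℝ), 0 ≤ cF →
      Measurable fun t : ℝ => volume {x | cF * t < F x} := by
    intro F cF h0
    have : Antitone fun t : ℝ => volume {x | cF * t < F x} := by
      intro t₁ t₂ h12
      exact measure_mono fun x hx =>
        lt_of_le_of_lt (mul_le_mul_of_nonneg_left h12 h0) hx
    exact this.measurable
  -- lower bound for ∫ h
  have hlow : ENNReal.ofReal c *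
      (ENNReal.ofReal a * (ENNReal.ofReal cf⁻¹ * P) + ENNReal.ofReal b * (ENNReal.ofReal cg⁻¹ * Q))
        ≤ ∫⁻ x, ENNReal.ofReal (h x) := by
    have step1 : ∫⁻ t in Ioo (0:ℝ) 1,
        (ENNReal.ofReal a * volume {x | cf * t < f x}
          + ENNReal.ofReal b * volume {x | cg * t < g x})
          ≤ ∫⁻ t in Ioo (0:ℝ) 1, volume {x | c * t < h x} :=
      setLIntegral_mono (hmes h c hcpos.le) key
    have step2 : ∫⁻ t in Ioo (0:ℝ) 1,
        (ENNReal.ofReal a * volume {x | cf * t < f x}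
          + ENNReal.ofReal b * volume {x | cg * t < g x})
        = ENNReal.ofReal a * (ENNReal.ofReal cf⁻¹ * P)
          + ENNReal.ofReal b * (ENNReal.ofReal cg⁻¹ * Q) := by
      rw [lintegral_add_left (((hmes f cf hcf0).const_mul _))]
      rw [lintegral_const_mul _ (hmes f cf hcf0), lintegral_const_mul _ (hmes g cg hcg0)]
      rw [hsplit f hfm hf0 cf hcfpos hfle, hsplit g hgm hg0 cg hcgpos hgle]
    have step3 : ∫⁻ t in Ioo (0:ℝ) 1, volume {x | c * t < h x}
        ≤ ENNReal.ofReal c⁻¹ * ∫⁻ x, ENNReal.ofReal (h x) := by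
      rw [← scaledLC hhm hh0 hcpos]
      exact lintegral_mono' (Measure.restrict_mono Ioo_subset_Ioi_self le_rfl) le_rfl
    calc ENNReal.ofReal c * (ENNReal.ofReal a * (ENNReal.ofReal cf⁻¹ * P)
          + ENNReal.ofReal b * (ENNReal.ofReal cg⁻¹ * Q))
        ≤ ENNReal.ofReal c * (ENNReal.ofReal c⁻¹ * ∫⁻ x, ENNReal.ofReal (h x)) := by
          refine mul_le_mul_right ?_ _
          rw [← step2]
          exact le_trans step1 step3
      _ = ∫⁻ x, ENNReal.ofReal (h x) := by
          rw [← mul_assoc, ← ENNReal.ofReal_mul hcpos.le, mul_inv_cancel₀ hcpos.ne',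
            ENNReal.ofReal_one, one_mul]
  -- AM-GM finish
  have hone : (c / cf) ^ a * (c / cg) ^ b = 1 := by
    rw [Real.div_rpow hcpos.le hcfpos.le, Real.div_rpow hcpos.le hcgpos.le, div_mul_div_comm,
      ← Real.rpow_add hcpos, hab, Real.rpow_one, ← hcdef, div_self hcpos.ne']
  have hamgm := ennreal_amgm (x := ENNReal.ofReal (c / cf) * P) (y := ENNReal.ofReal (c / cg) * Q)
    ha hb hab
  have hlhs : (ENNReal.ofReal (c / cf) * P) ^ a * (ENNReal.ofReal (c / cg) * Q) ^ b
      = P ^ a * Q ^ b := by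
    rw [ENNReal.mul_rpow_of_nonneg _ _ ha.le, ENNReal.mul_rpow_of_nonneg _ _ hb.le,
      ENNReal.ofReal_rpow_of_nonneg (by positivity) ha.le,
      ENNReal.ofReal_rpow_of_nonneg (by positivity) hb.le]
    calc ENNReal.ofReal ((c/cf)^a) * P ^ a * (ENNReal.ofReal ((c/cg)^b) * Q ^ b)
        = ENNReal.ofReal ((c/cf)^a) * ENNReal.ofReal ((c/cg)^b) * (P ^ a * Q ^ b) := by ring
      _ = P ^ a * Q ^ b := by
          rw [← ENNReal.ofReal_mul (by positivity), hone, ENNReal.ofReal_one, one_mul]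
  have hrhs : ENNReal.ofReal a * (ENNReal.ofReal (c / cf) * P)
      + ENNReal.ofReal b * (ENNReal.ofReal (c / cg) * Q)
      = ENNReal.ofReal c * (ENNReal.ofReal a * (ENNReal.ofReal cf⁻¹ * P)
          + ENNReal.ofReal b * (ENNReal.ofReal cg⁻¹ * Q)) := by
    rw [div_eq_mul_inv, div_eq_mul_inv, ENNReal.ofReal_mul hcpos.le, ENNReal.ofReal_mul hcpos.le]
    ring
  rw [hlhs, hrhs] at hamgm
  exact le_trans hamgm hlow

/-- Prékopa–Leindler on `ℝ`. -/
lemma pl {f g h : ℝ → ℝ} (hfm : Measurable f) (hgm : Measurable g) (hhm : Measurable h)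
    (hf0 : ∀ x, 0 ≤ f x) (hg0 : ∀ x, 0 ≤ g x) (hh0 : ∀ x, 0 ≤ h x)
    {a b : ℝ} (ha : 0 < a) (hb : 0 < b) (hab : a + b = 1)
    (hyp : ∀ x y, f x ^ a * g y ^ b ≤ h (a * x + b * y))
    (hPfin : (∫⁻ x, ENNReal.ofReal (f x)) ≠ ∞) (hQfin : (∫⁻ x, ENNReal.ofReal (g x)) ≠ ∞) :
    (∫⁻ x, ENNReal.ofReal (f x)) ^ a * (∫⁻ x, ENNReal.ofReal (g x)) ^ b
      ≤ ∫⁻ x, ENNReal.ofReal (h x) := by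
  set P := ∫⁻ x, ENNReal.ofReal (f x) with hP
  set Q := ∫⁻ x, ENNReal.ofReal (g x) with hQ
  set Pn := fun n : ℕ => ∫⁻ x, ENNReal.ofReal (min (f x) n) with hPn
  set Qn := fun n : ℕ => ∫⁻ x, ENNReal.ofReal (min (g x) n) with hQn
  have hsup : ∀ (F : ℝ → ℝ), Measurable F → (∀ x, 0 ≤ F x) →
      (⨆ n : ℕ, ∫⁻ x, ENNReal.ofReal (min (F x) n)) = ∫⁻ x, ENNReal.ofReal (F x) := by
    intro F hFm hF0
    rw [← lintegral_iSup (fun n => (hFm.min measurable_const).ennreal_ofReal)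
      (fun m n hmn x => ENNReal.ofReal_le_ofReal (min_le_min le_rfl (Nat.cast_le.mpr hmn)))]
    congr 1
    ext x
    apply le_antisymm (iSup_le fun n => ENNReal.ofReal_le_ofReal (min_le_left _ _))
    obtain ⟨n, hn⟩ := exists_nat_ge (F x)
    exact le_iSup_of_le n (le_of_eq (by rw [min_eq_left hn]))
  have hPmono : Monotone Pn := fun m n hmn => lintegral_mono fun x =>
    ENNReal.ofReal_le_ofReal (min_le_min le_rfl (Nat.cast_le.mpr hmn))
  have hQmono : Monotone Qn := fun m n hmn => lintegral_mono fun x =>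
    ENNReal.ofReal_le_ofReal (min_le_min le_rfl (Nat.cast_le.mpr hmn))
  have hPt : Filter.Tendsto Pn Filter.atTop (nhds P) := by
    rw [hP, ← hsup f hfm hf0]; exact tendsto_atTop_iSup hPmono
  have hQt : Filter.Tendsto Qn Filter.atTop (nhds Q) := by
    rw [hQ, ← hsup g hgm hg0]; exact tendsto_atTop_iSup hQmono
  have hPat : Filter.Tendsto (fun n => Pn n ^ a) Filter.atTop (nhds (P ^ a)) :=
    ((ENNReal.continuous_rpow_const (y := a)).tendsto P).comp hPt
  have hQbt : Filter.Tendsto (fun n => Qn n ^ b) Filter.atTop (nhds (Q ^ b)) :=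
    ((ENNReal.continuous_rpow_const (y := b)).tendsto Q).comp hQt
  have hPtop : P ^ a ≠ ∞ := ENNReal.rpow_ne_top_of_nonneg ha.le hPfin
  have hQtop : Q ^ b ≠ ∞ := ENNReal.rpow_ne_top_of_nonneg hb.le hQfin
  have hmul : Filter.Tendsto (fun n => Pn n ^ a * Qn n ^ b) Filter.atTop (nhds (P ^ a * Q ^ b)) :=
    ENNReal.Tendsto.mul hPat (Or.inr hQtop) hQbt (Or.inr hPtop)
  refine le_of_tendsto' hmul fun n => ?_
  refine pl_bounded (hfm.min measurable_const) (hgm.min measurable_const) hhm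
    (fun x => le_min (hf0 x) (Nat.cast_nonneg n)) (fun x => le_min (hg0 x) (Nat.cast_nonneg n))
    hh0 (n := (n : ℝ)) (fun x => min_le_right _ _) (fun x => min_le_right _ _) ha hb hab ?_
  intro x y
  refine le_trans ?_ (hyp x y)
  exact mul_le_mul
    (Real.rpow_le_rpow (le_min (hf0 x) (Nat.cast_nonneg n)) (min_le_left _ _) ha.le)
    (Real.rpow_le_rpow (le_min (hg0 y) (Nat.cast_nonneg n)) (min_le_left _ _) hb.le)
    (Real.rpow_nonneg (le_min (hg0 y) (Nat.cast_nonneg n)) _)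
    (Real.rpow_nonneg (hf0 x) _)

/-- Log-concavity of the CDF of a log-concave density. -/
lemma cdf_logconcave {ψ : ℝ → ℝ} (hmeas : Measurable ψ) (hnn : ∀ t, 0 ≤ ψ t)
    (hψint : Integrable ψ)
    (hlogconc : ∀ x y a b : ℝ, 0 ≤ a → 0 ≤ b → a + b = 1 →
      ψ x ^ a * ψ y ^ b ≤ ψ (a * x + b * y))
    {x y a b : ℝ} (ha : 0 < a) (hb : 0 < b) (hab : a + b = 1) :
    (∫ s in Iic x, ψ s) ^ a * (∫ s in Iic y, ψ s) ^ b ≤ ∫ s in Iic (a * x + b * y), ψ s := by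
  have hent : ∀ z : ℝ, (∫⁻ s, ENNReal.ofReal ((Iic z).indicator ψ s))
      = ENNReal.ofReal (∫ s in Iic z, ψ s) := by
    intro z
    rw [← ofReal_integral_eq_lintegral_ofReal (hψint.indicator measurableSet_Iic)
      (Filter.Eventually.of_forall (Set.indicator_nonneg (fun s _ => hnn s))),
      integral_indicator measurableSet_Iic]
  have hind0 : ∀ (z : ℝ) (u : ℝ), 0 ≤ (Iic z).indicator ψ u :=
    fun z => Set.indicator_nonneg (fun s _ => hnn s)
  have key := pl (f := (Iic x).indicator ψ) (g := (Iic y).indicator ψ)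
    (h := (Iic (a * x + b * y)).indicator ψ)
    (hmeas.indicator measurableSet_Iic) (hmeas.indicator measurableSet_Iic)
    (hmeas.indicator measurableSet_Iic)
    (hind0 x) (hind0 y) (hind0 _) ha hb hab ?_ ?_ ?_
  · rw [hent, hent, hent,
      ENNReal.ofReal_rpow_of_nonneg (setIntegral_nonneg measurableSet_Iic fun s _ => hnn s) ha.le,
      ENNReal.ofReal_rpow_of_nonneg (setIntegral_nonneg measurableSet_Iic fun s _ => hnn s) hb.le,
      ← ENNReal.ofReal_mul (Real.rpow_nonneg
        (setIntegral_nonneg measurableSet_Iic fun s _ => hnn s) _)] at key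
    exact (ENNReal.ofReal_le_ofReal_iff
      (setIntegral_nonneg measurableSet_Iic fun s _ => hnn s)).mp key
  · intro u v
    by_cases hu : u ∈ Iic x
    · by_cases hv : v ∈ Iic y
      · rw [Set.indicator_of_mem hu, Set.indicator_of_mem hv, Set.indicator_of_mem
          (show a * u + b * v ∈ Iic (a * x + b * y) from
            add_le_add (mul_le_mul_of_nonneg_left hu ha.le) (mul_le_mul_of_nonneg_left hv hb.le))]
        exact hlogconc u v a b ha.le hb.le hab
      · rw [Set.indicator_of_notMem hv, Real.zero_rpow hb.ne', mul_zero]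
        exact hind0 _ _
    · rw [Set.indicator_of_notMem hu, Real.zero_rpow ha.ne', zero_mul]
      exact hind0 _ _
  · rw [hent]; exact ENNReal.ofReal_ne_top
  · rw [hent]; exact ENNReal.ofReal_ne_top

end OneHotAux

/-- The one-hot likelihood factor is log-concave: for a log-concave probability density ψ
with CDF Ψ and any m, the map v ↦ ∫ ψ(t) ∏_{ℓ ≠ m} Ψ(t + v_m - v_ℓ) dt is log-concave
on ℝ^M. -/
theorem one_hot_likelihood_log_concave
    {M : ℕ} (m : Fin M)
    (ψ : ℝ → ℝ) (hmeas : Measurable ψ) (hnn : ∀ t, 0 ≤ ψ t)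
    (hint : ∫ t, ψ t = 1)
    (hlogconc : ∀ x y a b : ℝ, 0 ≤ a → 0 ≤ b → a + b = 1 →
      ψ x ^ a * ψ y ^ b ≤ ψ (a * x + b * y)) :
    ∀ (v w : Fin M → ℝ) (a b : ℝ), 0 ≤ a → 0 ≤ b → a + b = 1 →
      (∫ t, ψ t * ∏ ℓ ∈ Finset.univ.erase m,
          (∫ s in Set.Iic (t + v m - v ℓ), ψ s)) ^ a *
      (∫ t, ψ t * ∏ ℓ ∈ Finset.univ.erase m,
          (∫ s in Set.Iic (t + w m - w ℓ), ψ s)) ^ b ≤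
      (∫ t, ψ t * ∏ ℓ ∈ Finset.univ.erase m,
          (∫ s in Set.Iic (t + (a • v + b • w) m - (a • v + b • w) ℓ), ψ s)) := by
  intro v w a b ha hb hab
  have hψint : Integrable ψ := by
    by_contra hcon
    rw [integral_undef hcon] at hint
    exact one_ne_zero hint.symm
  rcases ha.eq_or_lt with rfl | ha
  · have hb1 : b = 1 := by linarith
    subst hb1
    simp [Real.rpow_zero, Real.rpow_one]
  rcases hb.eq_or_lt with rfl | hb
  · have ha1 : a = 1 := by linarith
    subst ha1
    simp [Real.rpow_zero, Real.rpow_one]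
  -- the genuine case 0 < a, 0 < b
  set Ψ : ℝ → ℝ := fun r => ∫ s in Set.Iic r, ψ s with hΨdef
  have hΨmono : Monotone Ψ := by
    intro r s hrs
    exact setIntegral_mono_set hψint.integrableOn
      (ae_restrict_of_ae (Filter.Eventually.of_forall hnn))
      (HasSubset.Subset.eventuallyLE (Set.Iic_subset_Iic.mpr hrs))
  have hΨm : Measurable Ψ := hΨmono.measurable
  have hΨ0 : ∀ r, 0 ≤ Ψ r := fun r => setIntegral_nonneg measurableSet_Iic fun s _ => hnn s
  have hΨ1 : ∀ r, Ψ r ≤ 1 := fun r =>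
    hint ▸ setIntegral_le_integral hψint (Filter.Eventually.of_forall hnn)
  set F : (Fin M → ℝ) → ℝ → ℝ :=
    fun v' t => ψ t * ∏ ℓ ∈ Finset.univ.erase m, Ψ (t + v' m - v' ℓ) with hFdef
  have hFm : ∀ v', Measurable (F v') := by
    intro v'
    exact hmeas.mul (Finset.measurable_prod _ fun ℓ _ =>
      hΨm.comp ((measurable_id.add_const (v' m)).sub_const (v' ℓ)))
  have hF0 : ∀ v' t, 0 ≤ F v' t := fun v' t =>
    mul_nonneg (hnn t) (Finset.prod_nonneg fun ℓ _ => hΨ0 _)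
  have hFle : ∀ v' t, F v' t ≤ ψ t := by
    intro v' t
    calc F v' t ≤ ψ t * 1 := mul_le_mul_of_nonneg_left
          (Finset.prod_le_one (fun ℓ _ => hΨ0 _) (fun ℓ _ => hΨ1 _)) (hnn t)
      _ = ψ t := mul_one _
  have hFint : ∀ v', Integrable (F v') := by
    intro v'
    refine hψint.mono ((hFm v').aestronglyMeasurable) (Filter.Eventually.of_forall fun t => ?_)
    rw [Real.norm_eq_abs, Real.norm_eq_abs, abs_of_nonneg (hF0 v' t), abs_of_nonneg (hnn t)]
    exact hFle v' t
  have hent : ∀ v', (∫⁻ t, ENNReal.ofReal (F v' t)) = ENNReal.ofReal (∫ t, F v' t) := by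
    intro v'
    rw [← ofReal_integral_eq_lintegral_ofReal (hFint v')
      (Filter.Eventually.of_forall (hF0 v'))]
  have hyp : ∀ x y, F v x ^ a * F w y ^ b ≤ F (a • v + b • w) (a * x + b * y) := by
    intro x y
    have hexp : F v x ^ a * F w y ^ b
        = (ψ x ^ a * ψ y ^ b) * ∏ ℓ ∈ Finset.univ.erase m,
            (Ψ (x + v m - v ℓ) ^ a * Ψ (y + w m - w ℓ) ^ b) := by
      rw [hFdef]
      simp only
      rw [Real.mul_rpow (hnn x) (Finset.prod_nonneg fun ℓ _ => hΨ0 _),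
        Real.mul_rpow (hnn y) (Finset.prod_nonneg fun ℓ _ => hΨ0 _),
        ← Real.finset_prod_rpow _ _ (fun ℓ _ => hΨ0 _) a,
        ← Real.finset_prod_rpow _ _ (fun ℓ _ => hΨ0 _) b,
        Finset.prod_mul_distrib]
      ring
    rw [hexp, hFdef]
    simp only
    refine mul_le_mul (hlogconc x y a b ha.le hb.le hab) ?_
      (Finset.prod_nonneg fun ℓ _ =>
        mul_nonneg (Real.rpow_nonneg (hΨ0 _) _) (Real.rpow_nonneg (hΨ0 _) _))
      (hnn _)
    refine Finset.prod_le_prod (fun ℓ _ =>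
      mul_nonneg (Real.rpow_nonneg (hΨ0 _) _) (Real.rpow_nonneg (hΨ0 _) _)) (fun ℓ _ => ?_)
    have harg : a * (x + v m - v ℓ) + b * (y + w m - w ℓ)
        = a * x + b * y + (a • v + b • w) m - (a • v + b • w) ℓ := by
      simp only [Pi.add_apply, Pi.smul_apply, smul_eq_mul]
      ring
    have := OneHotAux.cdf_logconcave hmeas hnn hψint hlogconc
      (x := x + v m - v ℓ) (y := y + w m - w ℓ) ha hb hab
    rw [harg] at this
    exact this
  have key := OneHotAux.pl (f := F v) (g := F w) (h := F (a • v + b • w))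
    (hFm v) (hFm w) (hFm _) (hF0 v) (hF0 w) (hF0 _) ha hb hab hyp
    (by rw [hent]; exact ENNReal.ofReal_ne_top) (by rw [hent]; exact ENNReal.ofReal_ne_top)
  rw [hent, hent, hent,
    ENNReal.ofReal_rpow_of_nonneg (integral_nonneg (hF0 v)) ha.le,
    ENNReal.ofReal_rpow_of_nonneg (integral_nonneg (hF0 w)) hb.le,
    ← ENNReal.ofReal_mul (Real.rpow_nonneg (integral_nonneg (hF0 v)) _)] at key
  exact (ENNReal.ofReal_le_ofReal_iff (integral_nonneg (hF0 _))).mp key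
end

section
/- Let C ∈ ℝ^{N×N} be symmetric positive definite, Z' ⊆ {1,…,N} with |Z'| = J, and let C' ∈ ℝ^{J×J} be the principal submatrix of C with rows and columns indexed by Z'. Let Φ' : ℝ^J → ℝ be convex, bounded below, and differentiable. Then minimizing J(u) = (1/2)⟨u, C⁻¹u⟩ + Φ'(u|_{Z'}) over u ∈ ℝ^N is equivalent to minimizing J'(b) = (1/2)⟨b, (C')⁻¹b⟩ + Φ'(b) over b ∈ ℝ^J, in the sense that both have unique minimizers u* and b*, and b* = u*|_{Z'}. -/
open Matrix BigOperators


lemma quad_cont {n : ℕ} (A : Matrix (Fin n) (Fin n) ℝ) :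
    Continuous (fun u : Fin n → ℝ => u ⬝ᵥ A.mulVec u) := by
  simp only [dotProduct, Matrix.mulVec]
  fun_prop

lemma quad_smul {n : ℕ} (A : Matrix (Fin n) (Fin n) ℝ) (t : ℝ) (u : Fin n → ℝ) :
    (t • u) ⬝ᵥ A.mulVec (t • u) = t ^ 2 * (u ⬝ᵥ A.mulVec u) := by
  simp only [dotProduct, Matrix.mulVec, Pi.smul_apply, smul_eq_mul,
    Finset.mul_sum]
  refine Finset.sum_congr rfl fun i _ => Finset.sum_congr rfl fun j _ => by ring

lemma quad_par {n : ℕ} (A : Matrix (Fin n) (Fin n) ℝ) (u v : Fin n → ℝ) :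
    (u + v) ⬝ᵥ A.mulVec (u + v) + (u - v) ⬝ᵥ A.mulVec (u - v)
      = 2 * (u ⬝ᵥ A.mulVec u) + 2 * (v ⬝ᵥ A.mulVec v) := by
  simp only [Matrix.mulVec_add, Matrix.mulVec_sub, dotProduct_add,
    dotProduct_sub, add_dotProduct, sub_dotProduct]
  ring

lemma quad_expand_sub {n : ℕ} (A : Matrix (Fin n) (Fin n) ℝ) (u v : Fin n → ℝ) :
    (u - v) ⬝ᵥ A.mulVec (u - v)
      = u ⬝ᵥ A.mulVec u - u ⬝ᵥ A.mulVec v - v ⬝ᵥ A.mulVec u + v ⬝ᵥ A.mulVec v := by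
  simp only [Matrix.mulVec_sub, dotProduct_sub, sub_dotProduct]
  ring

lemma dot_symm {n : ℕ} (M : Matrix (Fin n) (Fin n) ℝ) (h : Mᵀ = M) (u v : Fin n → ℝ) :
    u ⬝ᵥ M.mulVec v = v ⬝ᵥ M.mulVec u := by
  simp only [dotProduct, Matrix.mulVec, Finset.mul_sum]
  rw [Finset.sum_comm]
  refine Finset.sum_congr rfl fun i _ => Finset.sum_congr rfl fun j _ => ?_
  rw [← congrFun (congrFun h j) i]
  simp only [Matrix.transpose_apply]
  ring

lemma posdef_pos {n : ℕ} {A : Matrix (Fin n) (Fin n) ℝ} (hA : A.PosDef)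
    {x : Fin n → ℝ} (hx : x ≠ 0) : 0 < x ⬝ᵥ A.mulVec x := by
  simpa using (posDef_iff_dotProduct_mulVec.1 hA).2 hx

lemma posdef_nonneg {n : ℕ} {A : Matrix (Fin n) (Fin n) ℝ} (hA : A.PosDef)
    (x : Fin n → ℝ) : 0 ≤ x ⬝ᵥ A.mulVec x := by
  rcases eq_or_ne x 0 with rfl | hx
  · simp
  · exact (posdef_pos hA hx).le

lemma posdef_transpose_eq {n : ℕ} {A : Matrix (Fin n) (Fin n) ℝ} (hA : A.PosDef) :
    Aᵀ = A := by
  have := hA.1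
  simpa [Matrix.IsHermitian] using this

lemma quad_coercive {n : ℕ} (A : Matrix (Fin n) (Fin n) ℝ) (hA : A.PosDef) :
    ∃ c > 0, ∀ u : Fin n → ℝ, c * ‖u‖ ^ 2 ≤ u ⬝ᵥ A.mulVec u := by
  by_cases hn : Nontrivial (Fin n → ℝ)
  · have hsph : (Metric.sphere (0 : Fin n → ℝ) 1).Nonempty :=
      NormedSpace.sphere_nonempty.2 zero_le_one
    have hcpt : IsCompact (Metric.sphere (0 : Fin n → ℝ) 1) := isCompact_sphere _ _
    obtain ⟨u0, hu0, hmin⟩ := hcpt.exists_isMinOn hsph ((quad_cont A).continuousOn)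
    have hu0n : ‖u0‖ = 1 := by simpa using hu0
    have hu0ne : u0 ≠ 0 := by intro h; rw [h] at hu0n; simp at hu0n
    refine ⟨u0 ⬝ᵥ A.mulVec u0, posdef_pos hA hu0ne, fun u => ?_⟩
    rcases eq_or_ne u 0 with rfl | hu
    · simp
    · have hnu : (0:ℝ) < ‖u‖ := norm_pos_iff.2 hu
      have h1 : (‖u‖⁻¹ • u) ∈ Metric.sphere (0 : Fin n → ℝ) 1 := by
        simp [norm_smul, abs_of_pos hnu, inv_mul_cancel₀ hnu.ne']
      have h2 := hmin h1
      simp only [Set.mem_setOf_eq] at h2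
      have h3 : (‖u‖⁻¹ • u) ⬝ᵥ A.mulVec (‖u‖⁻¹ • u) = ‖u‖⁻¹ ^ 2 * (u ⬝ᵥ A.mulVec u) :=
        quad_smul A _ u
      rw [h3] at h2
      have := mul_le_mul_of_nonneg_left h2 (le_of_lt (pow_pos hnu 2))
      calc (u0 ⬝ᵥ A.mulVec u0) * ‖u‖ ^ 2 ≤ ‖u‖ ^ 2 * (‖u‖⁻¹ ^ 2 * (u ⬝ᵥ A.mulVec u)) := by
            linarith
        _ = u ⬝ᵥ A.mulVec u := by field_simp
  · refine ⟨1, one_pos, fun u => ?_⟩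
    have : u = 0 := by
      by_contra h
      exact hn ⟨u, 0, h⟩
    simp [this]

lemma exists_min {n : ℕ} (A : Matrix (Fin n) (Fin n) ℝ) (hA : A.PosDef)
    (Φ : (Fin n → ℝ) → ℝ) (hbdd : BddBelow (Set.range Φ)) (hcont : Continuous Φ) :
    ∃ u : Fin n → ℝ, ∀ v,
      (1/2) * (u ⬝ᵥ A.mulVec u) + Φ u ≤ (1/2) * (v ⬝ᵥ A.mulVec v) + Φ v := by
  obtain ⟨c, hc, hcoer⟩ := quad_coercive A hA
  obtain ⟨m, hm⟩ := hbdd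
  set F := fun u : Fin n → ℝ => (1/2) * (u ⬝ᵥ A.mulVec u) + Φ u with hF
  have hFc : Continuous F := (continuous_const.mul (quad_cont A)).add hcont
  have hlow : ∀ u, c/2 * ‖u‖^2 + m ≤ F u := by
    intro u
    have h1 := hcoer u
    have h2 := hm ⟨u, rfl⟩
    simp only [hF]
    nlinarith [posdef_nonneg hA u]
  set R := Real.sqrt ((F 0 - m + 1) * (2 / c)) with hR
  have hRnn : 0 ≤ R := Real.sqrt_nonneg _
  have hF0m : m ≤ F 0 := by have := hlow 0; simp at this; linarith
  have hRsq : R ^ 2 = (F 0 - m + 1) * (2 / c) := by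
    rw [hR, Real.sq_sqrt]
    apply mul_nonneg (by linarith) (by positivity)
  have hball : IsCompact (Metric.closedBall (0 : Fin n → ℝ) R) := isCompact_closedBall _ _
  have h0mem : (0 : Fin n → ℝ) ∈ Metric.closedBall (0 : Fin n → ℝ) R := by
    simp [hRnn]
  obtain ⟨u, hu, hmin⟩ := hball.exists_isMinOn ⟨0, h0mem⟩ hFc.continuousOn
  refine ⟨u, fun v => ?_⟩
  show F u ≤ F v
  by_cases hv : v ∈ Metric.closedBall (0 : Fin n → ℝ) R
  · exact hmin hv
  · have h1 : R < ‖v‖ := by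
      simp only [Metric.mem_closedBall, dist_zero_right, not_le] at hv
      exact hv
    have h2 : R ^ 2 < ‖v‖ ^ 2 := by
      exact pow_lt_pow_left₀ h1 hRnn (by norm_num)
    have h3 : F 0 - m + 1 < c/2 * ‖v‖ ^ 2 := by
      have : c/2 * R^2 = F 0 - m + 1 := by
        rw [hRsq]; field_simp
      nlinarith
    have h4 := hmin h0mem
    simp only [Set.mem_setOf_eq] at h4
    have h5 := hlow v
    simp only [hF] at h3 h4 h5 ⊢
    linarith

lemma min_unique {n : ℕ} (A : Matrix (Fin n) (Fin n) ℝ) (hA : A.PosDef)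
    (Φ : (Fin n → ℝ) → ℝ) (hconv : ConvexOn ℝ Set.univ Φ) {u v : Fin n → ℝ}
    (hu : ∀ w, (1/2) * (u ⬝ᵥ A.mulVec u) + Φ u ≤ (1/2) * (w ⬝ᵥ A.mulVec w) + Φ w)
    (hv : ∀ w, (1/2) * (v ⬝ᵥ A.mulVec v) + Φ v ≤ (1/2) * (w ⬝ᵥ A.mulVec w) + Φ w) :
    u = v := by
  by_contra hne
  set mid := (1/2 : ℝ) • u + (1/2 : ℝ) • v with hmid
  have hΦ : Φ mid ≤ (1/2) * Φ u + (1/2) * Φ v := by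
    have := hconv.2 (Set.mem_univ u) (Set.mem_univ v)
      (by norm_num : (0:ℝ) ≤ 1/2) (by norm_num : (0:ℝ) ≤ 1/2) (by norm_num)
    rw [hmid]
    simpa [smul_eq_mul] using this
  have hmid2 : mid = (1/2 : ℝ) • (u + v) := by rw [hmid, smul_add]
  have hq : mid ⬝ᵥ A.mulVec mid = (1/2)^2 * ((u+v) ⬝ᵥ A.mulVec (u+v)) := by
    rw [hmid2]; exact quad_smul A _ _
  have hpar := quad_par A u v
  have hpos : 0 < (u - v) ⬝ᵥ A.mulVec (u - v) :=
    posdef_pos hA (sub_ne_zero_of_ne hne)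
  have heq : (1/2) * (u ⬝ᵥ A.mulVec u) + Φ u = (1/2) * (v ⬝ᵥ A.mulVec v) + Φ v :=
    le_antisymm (hu v) (hv u)
  have hum := hu mid
  nlinarith [hq, hpar, hpos, heq, hΦ, hum]

noncomputable def Pext {N J : ℕ} (ρ : Fin J → Fin N) (y : Fin J → ℝ) : Fin N → ℝ :=
  Function.extend ρ y 0

lemma Pext_apply {N J : ℕ} {ρ : Fin J → Fin N} (hρ : Function.Injective ρ)
    (y : Fin J → ℝ) (k : Fin J) : Pext ρ y (ρ k) = y k := by
  simp [Pext, hρ.extend_apply]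

lemma dot_Pext {N J : ℕ} {ρ : Fin J → Fin N} (hρ : Function.Injective ρ)
    (y : Fin J → ℝ) (u : Fin N → ℝ) : Pext ρ y ⬝ᵥ u = y ⬝ᵥ (u ∘ ρ) := by
  simp only [dotProduct]
  rw [← Finset.sum_subset (Finset.subset_univ (Finset.univ.image ρ))]
  · rw [Finset.sum_image (fun a _ b _ h => hρ h)]
    refine Finset.sum_congr rfl fun k _ => ?_
    rw [Pext_apply hρ]
    rfl
  · intro i _ hi
    have h0 : Pext ρ y i = 0 := by
      rw [Pext, Function.extend_apply']
      · rfl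
      · rintro ⟨a, ha⟩
        exact hi (Finset.mem_image.2 ⟨a, Finset.mem_univ _, ha⟩)
    simp [h0]

lemma Pext_ne_zero {N J : ℕ} {ρ : Fin J → Fin N} (hρ : Function.Injective ρ)
    {x : Fin J → ℝ} (hx : x ≠ 0) : Pext ρ x ≠ 0 := by
  intro h
  apply hx
  funext k
  have := congrFun h (ρ k)
  rwa [Pext_apply hρ] at this

lemma mulVec_Pext_comp {N J : ℕ} (C : Matrix (Fin N) (Fin N) ℝ) {ρ : Fin J → Fin N}
    (hρ : Function.Injective ρ) (y : Fin J → ℝ) :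
    (C.mulVec (Pext ρ y)) ∘ ρ = (C.submatrix ρ ρ).mulVec y := by
  funext k
  show (C.mulVec (Pext ρ y)) (ρ k) = _
  have h1 : (C.mulVec (Pext ρ y)) (ρ k) = C (ρ k) ⬝ᵥ Pext ρ y := rfl
  rw [h1, dotProduct_comm, dot_Pext hρ]
  simp only [Matrix.mulVec, dotProduct, Matrix.submatrix_apply, Function.comp]
  refine Finset.sum_congr rfl fun j _ => mul_comm _ _


lemma submatrix_posdef {N J : ℕ} (C : Matrix (Fin N) (Fin N) ℝ) (hC : C.PosDef)
    {ρ : Fin J → Fin N} (hρ : Function.Injective ρ) : (C.submatrix ρ ρ).PosDef := by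
  have ht : Cᵀ = C := posdef_transpose_eq hC
  refine posDef_iff_dotProduct_mulVec.2 ⟨?_, ?_⟩
  · show (C.submatrix ρ ρ)ᴴ = _
    ext k l
    simp only [Matrix.conjTranspose_apply, Matrix.submatrix_apply, star_trivial]
    conv_lhs => rw [← ht]
    rfl
  · intro x hx
    have h1 : x ⬝ᵥ (C.submatrix ρ ρ).mulVec x = Pext ρ x ⬝ᵥ C.mulVec (Pext ρ x) := by
      rw [← mulVec_Pext_comp C hρ, ← dot_Pext hρ]
    have h2 := posdef_pos hC (Pext_ne_zero hρ hx)
    simpa [h1] using h2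

/-- Dimension reduction for the regularized functional: minimizing
J(u) = (1/2)⟨u, C⁻¹u⟩ + Φ'(u|_{Z'}) over ℝ^N is equivalent to minimizing
J'(b) = (1/2)⟨b, (C')⁻¹b⟩ + Φ'(b) over ℝ^J, where C' is the principal submatrix of C on
the labelled indices (given by the injective ordering ρ); both have unique minimizers
and b* = u*|_{Z'}. -/
theorem dimension_reduction {N J : ℕ}
    (C : Matrix (Fin N) (Fin N) ℝ) (hC : C.PosDef)
    (ρ : Fin J → Fin N) (hρ : Function.Injective ρ)
    (Φ' : (Fin J → ℝ) → ℝ)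
    (hconv : ConvexOn ℝ Set.univ Φ')
    (hbdd : BddBelow (Set.range Φ'))
    (hdiff : Differentiable ℝ Φ') :
    ∃ (ustar : Fin N → ℝ) (bstar : Fin J → ℝ),
      (∀ v : Fin N → ℝ,
        (1 / 2) * (ustar ⬝ᵥ C⁻¹.mulVec ustar) + Φ' (ustar ∘ ρ)
          ≤ (1 / 2) * (v ⬝ᵥ C⁻¹.mulVec v) + Φ' (v ∘ ρ)) ∧
      (∀ v : Fin N → ℝ,
        (∀ w : Fin N → ℝ,
          (1 / 2) * (v ⬝ᵥ C⁻¹.mulVec v) + Φ' (v ∘ ρ)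
            ≤ (1 / 2) * (w ⬝ᵥ C⁻¹.mulVec w) + Φ' (w ∘ ρ)) → v = ustar) ∧
      (∀ b : Fin J → ℝ,
        (1 / 2) * (bstar ⬝ᵥ (C.submatrix ρ ρ)⁻¹.mulVec bstar) + Φ' bstar
          ≤ (1 / 2) * (b ⬝ᵥ (C.submatrix ρ ρ)⁻¹.mulVec b) + Φ' b) ∧
      (∀ b : Fin J → ℝ,
        (∀ c : Fin J → ℝ,
          (1 / 2) * (b ⬝ᵥ (C.submatrix ρ ρ)⁻¹.mulVec b) + Φ' b
            ≤ (1 / 2) * (c ⬝ᵥ (C.submatrix ρ ρ)⁻¹.mulVec c) + Φ' c) → b = bstar) ∧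
      bstar = ustar ∘ ρ := by
  classical
  have hCp : (C.submatrix ρ ρ).PosDef := submatrix_posdef C hC hρ
  have hA : (C⁻¹).PosDef := hC.inv
  have hAp : ((C.submatrix ρ ρ)⁻¹).PosDef := hCp.inv
  have hAt : (C⁻¹)ᵀ = C⁻¹ := posdef_transpose_eq hA
  have hdet : IsUnit C.det := isUnit_iff_ne_zero.2 (ne_of_gt hC.det_pos)
  have hdetp : IsUnit (C.submatrix ρ ρ).det := isUnit_iff_ne_zero.2 (ne_of_gt hCp.det_pos)
  have hinv_mul : ∀ w : Fin N → ℝ, C⁻¹.mulVec (C.mulVec w) = w := by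
    intro w
    rw [Matrix.mulVec_mulVec, Matrix.nonsing_inv_mul C hdet, Matrix.one_mulVec]
  have hmul_inv' : ∀ w : Fin J → ℝ,
      (C.submatrix ρ ρ).mulVec ((C.submatrix ρ ρ)⁻¹.mulVec w) = w := by
    intro w
    rw [Matrix.mulVec_mulVec, Matrix.mul_nonsing_inv _ hdetp, Matrix.one_mulVec]
  -- the reduced functional data
  have hΦNconv : ConvexOn ℝ Set.univ (fun u : Fin N → ℝ => Φ' (u ∘ ρ)) := by
    refine ⟨convex_univ, ?_⟩
    intro x _ y _ a b ha hb hab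
    have hcomp : (a • x + b • y) ∘ ρ = a • (x ∘ ρ) + b • (y ∘ ρ) := rfl
    have := hconv.2 (Set.mem_univ (x ∘ ρ)) (Set.mem_univ (y ∘ ρ)) ha hb hab
    simpa [hcomp] using this
  have hΦNbdd : BddBelow (Set.range (fun u : Fin N → ℝ => Φ' (u ∘ ρ))) := by
    refine hbdd.mono ?_
    rintro _ ⟨u, rfl⟩
    exact ⟨u ∘ ρ, rfl⟩
  have hΦNcont : Continuous (fun u : Fin N → ℝ => Φ' (u ∘ ρ)) :=
    hdiff.continuous.comp (continuous_pi fun k => continuous_apply (ρ k))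
  obtain ⟨ustar, hustar⟩ := exists_min C⁻¹ hA _ hΦNbdd hΦNcont
  -- key identities for the representer u_y = C (Pext ρ y), y = (C')⁻¹ b
  have hcomp_b : ∀ b : Fin J → ℝ,
      (C.mulVec (Pext ρ ((C.submatrix ρ ρ)⁻¹.mulVec b))) ∘ ρ = b := by
    intro b
    rw [mulVec_Pext_comp C hρ, hmul_inv']
  have hinv_uy : ∀ b : Fin J → ℝ,
      C⁻¹.mulVec (C.mulVec (Pext ρ ((C.submatrix ρ ρ)⁻¹.mulVec b)))
        = Pext ρ ((C.submatrix ρ ρ)⁻¹.mulVec b) := fun b => hinv_mul _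
  have hquad_uy : ∀ b : Fin J → ℝ,
      (C.mulVec (Pext ρ ((C.submatrix ρ ρ)⁻¹.mulVec b)))
          ⬝ᵥ C⁻¹.mulVec (C.mulVec (Pext ρ ((C.submatrix ρ ρ)⁻¹.mulVec b)))
        = b ⬝ᵥ (C.submatrix ρ ρ)⁻¹.mulVec b := by
    intro b
    rw [hinv_uy b, dotProduct_comm, dot_Pext hρ, hcomp_b b, dotProduct_comm]
  have keyineq : ∀ u : Fin N → ℝ,
      (u ∘ ρ) ⬝ᵥ (C.submatrix ρ ρ)⁻¹.mulVec (u ∘ ρ) ≤ u ⬝ᵥ C⁻¹.mulVec u := by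
    intro u
    set b := u ∘ ρ with hb
    set uy := C.mulVec (Pext ρ ((C.submatrix ρ ρ)⁻¹.mulVec b)) with huy
    have expand := quad_expand_sub C⁻¹ u uy
    have e1 : u ⬝ᵥ C⁻¹.mulVec uy = ((C.submatrix ρ ρ)⁻¹.mulVec b) ⬝ᵥ b := by
      rw [huy, hinv_uy b, dotProduct_comm, dot_Pext hρ]
    have e2 : uy ⬝ᵥ C⁻¹.mulVec u = ((C.submatrix ρ ρ)⁻¹.mulVec b) ⬝ᵥ b := by
      rw [dot_symm _ hAt]
      exact e1
    have e3 : uy ⬝ᵥ C⁻¹.mulVec uy = ((C.submatrix ρ ρ)⁻¹.mulVec b) ⬝ᵥ b := by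
      rw [huy, hinv_uy b, dotProduct_comm, dot_Pext hρ, hcomp_b b]
    have e4 : ((C.submatrix ρ ρ)⁻¹.mulVec b) ⬝ᵥ b = b ⬝ᵥ (C.submatrix ρ ρ)⁻¹.mulVec b :=
      dotProduct_comm _ _
    have pos := posdef_nonneg hA (u - uy)
    linarith [expand, pos, e1, e2, e3, e4]
  -- bstar is a minimizer of the reduced functional
  have hbmin : ∀ b : Fin J → ℝ,
      (1 / 2) * ((ustar ∘ ρ) ⬝ᵥ (C.submatrix ρ ρ)⁻¹.mulVec (ustar ∘ ρ)) + Φ' (ustar ∘ ρ)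
        ≤ (1 / 2) * (b ⬝ᵥ (C.submatrix ρ ρ)⁻¹.mulVec b) + Φ' b := by
    intro b
    have h1 := keyineq ustar
    have h2 := hustar (C.mulVec (Pext ρ ((C.submatrix ρ ρ)⁻¹.mulVec b)))
    rw [hquad_uy b, hcomp_b b] at h2
    linarith
  refine ⟨ustar, ustar ∘ ρ, fun v => hustar v, ?_, hbmin, ?_, rfl⟩
  · intro v hv
    exact min_unique C⁻¹ hA _ hΦNconv hv (fun w => hustar w)
  · intro b hb
    exact min_unique ((C.submatrix ρ ρ)⁻¹) hAp Φ' hconv hb hbmin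
end
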